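/- Let n ≥ 2, let Ω ⊂ ℝⁿ be an open bounded set, let c > 0, and set ζ := i e₁ + e₂ ∈ ℂⁿ. Let F : Ω → ℂⁿ and g : Ω → ℂ be measurable and essentially bounded. Suppose there exist constants C > 0 and N ≥ 0 such that for every h ∈ (0,1) there is a C¹ function w_h : ℝⁿ → ℂ with sup_{x∈Ω}(|w_h(x)| + |∇w_h(x)|) ≤ C (1 + 1/h)^N e^{−c/h}, and such that the function v_h(x) := exp(−i(x·ζ)/h) + w_h(x) satisfies F(x)·(Dv_h)(x) + g(x) v_h(x) = 0 for Lebesgue-almost every x ∈ Ω. Then F(x)·ζ = 0 for Lebesgue-almost every x ∈ Ω with x₁ > −c. -/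

import Mathlib

open MeasureTheory
open scoped BigOperators

/-- Let `n ≥ 2`, `Ω ⊂ ℝⁿ` open bounded, `c > 0`, and
`ζ = i e₁ + e₂ ∈ ℂⁿ`.  Let `F : Ω → ℂⁿ`, `g : Ω → ℂ` be measurable and
essentially bounded.  Suppose there are `C > 0`, `N ≥ 0` such that for every
`h ∈ (0,1)` there is a `C¹` function `w_h : ℝⁿ → ℂ` with
`sup_{x∈Ω} (|w_h(x)| + |∇w_h(x)|) ≤ C (1 + 1/h)^N e^{−c/h}`, and such that
`v_h(x) = exp(−i(x·ζ)/h) + w_h(x)` satisfies `F·Dv_h + g v_h = 0` a.e. in `Ω`.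
Then `F(x)·ζ = 0` for a.e. `x ∈ Ω` with `x₁ > −c`. -/
-- derivative helper
lemma lvs_hasFDerivAt (n : ℕ) (a : Fin n → ℂ) (x : Fin n → ℝ) :
    HasFDerivAt (fun y : Fin n → ℝ => Complex.exp (∑ i, (y i : ℂ) * a i))
      (Complex.exp (∑ i, (x i : ℂ) * a i) •
        (∑ i, ContinuousLinearMap.smulRight
          (ContinuousLinearMap.proj (R := ℝ) (φ := fun _ : Fin n => ℝ) i) (a i))) x := by
  set L : (Fin n → ℝ) →L[ℝ] ℂ := ∑ i, ContinuousLinearMap.smulRight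
      (ContinuousLinearMap.proj (R := ℝ) (φ := fun _ : Fin n => ℝ) i) (a i) with hLdef
  have hLa : ∀ y : Fin n → ℝ, L y = ∑ i, (y i : ℂ) * a i := by
    intro y
    simp [hLdef, ContinuousLinearMap.sum_apply, Complex.real_smul]
  have hL : HasFDerivAt (fun y : Fin n → ℝ => ∑ i, (y i : ℂ) * a i) L x := by
    have := L.hasFDerivAt (x := x)
    exact this.congr_fderiv rfl |>.congr_of_eventuallyEq (by filter_upwards with y using (hLa y).symm)
  have := (Complex.hasDerivAt_exp (∑ i, (x i : ℂ) * a i)).comp_hasFDerivAt x hL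
  exact this

lemma lvs_fderiv_apply (n : ℕ) (ζ : Fin n → ℂ) (h : ℝ) (hh : h ≠ 0)
    (w : (Fin n → ℝ) → ℂ) (hw : ContDiff ℝ 1 w) (x : Fin n → ℝ) (j : Fin n) :
    fderiv ℝ (fun y => Complex.exp ((-Complex.I) * (∑ i, (y i : ℂ) * ζ i) / (h : ℂ)) + w y) x
        (Pi.single j (1 : ℝ))
      = Complex.exp ((-Complex.I) * (∑ i, (x i : ℂ) * ζ i) / (h : ℂ)) *
          ((-Complex.I) * ζ j / (h : ℂ)) + fderiv ℝ w x (Pi.single j (1 : ℝ)) := by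
  set a : Fin n → ℂ := fun i => (-Complex.I) * ζ i / (h : ℂ) with ha
  have key : ∀ y : Fin n → ℝ,
      (-Complex.I) * (∑ i, (y i : ℂ) * ζ i) / (h : ℂ) = ∑ i, (y i : ℂ) * a i := by
    intro y
    rw [Finset.mul_sum, Finset.sum_div]
    exact Finset.sum_congr rfl fun i _ => by rw [ha]; ring
  have h1 := lvs_hasFDerivAt n a x
  have h2 := ((hw.differentiable one_ne_zero) x).hasFDerivAt
  have h3 := h1.add h2
  have h4 : HasFDerivAt
      (fun y => Complex.exp ((-Complex.I) * (∑ i, (y i : ℂ) * ζ i) / (h : ℂ)) + w y)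
      (Complex.exp (∑ i, (x i : ℂ) * a i) •
        (∑ i, ContinuousLinearMap.smulRight
          (ContinuousLinearMap.proj (R := ℝ) (φ := fun _ : Fin n => ℝ) i) (a i))
        + fderiv ℝ w x) x := by
    refine h3.congr_of_eventuallyEq ?_
    filter_upwards with y
    rw [key y]
    rfl
  rw [h4.fderiv]
  rw [key x]
  simp only [ContinuousLinearMap.add_apply, ContinuousLinearMap.smul_apply,
    ContinuousLinearMap.sum_apply, ContinuousLinearMap.smulRight_apply,
    ContinuousLinearMap.proj_apply, Pi.single_apply, smul_eq_mul, ite_smul, one_smul, zero_smul]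
  rw [Finset.sum_ite_eq' Finset.univ j a]
  simp [ha]

lemma lvs_sum_val (n : ℕ) (hn : 2 ≤ n) (ζ : Fin n → ℂ)
    (hζ : ζ = fun j : Fin n => if (j : ℕ) = 0 then Complex.I
      else if (j : ℕ) = 1 then 1 else 0) (x : Fin n → ℝ) :
    (∑ i, (x i : ℂ) * ζ i)
      = (x (⟨0, Nat.lt_of_lt_of_le Nat.zero_lt_two hn⟩ : Fin n) : ℂ) * Complex.I + (x (⟨1, by omega⟩ : Fin n) : ℂ) := by
  set i0 : Fin n := ⟨0, Nat.lt_of_lt_of_le Nat.zero_lt_two hn⟩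
  set i1 : Fin n := ⟨1, by omega⟩
  have : ∀ i : Fin n, (x i : ℂ) * ζ i
      = (if i = i0 then (x i0 : ℂ) * Complex.I else 0)
        + (if i = i1 then (x i1 : ℂ) else 0) := by
    intro i
    subst hζ
    by_cases h0 : (i : ℕ) = 0
    · have : i = i0 := Fin.ext h0
      subst this
      simp [i0, i1]
    · by_cases h1 : (i : ℕ) = 1
      · have : i = i1 := Fin.ext h1
        subst this
        simp [i0, i1, Fin.ext_iff, h0]
      · have hi0 : i ≠ i0 := by simp [Fin.ext_iff, i0, h0]
        have hi1 : i ≠ i1 := by simp [Fin.ext_iff, i1, h1]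
        simp [h0, h1, hi0, hi1]
  rw [Finset.sum_congr rfl fun i _ => this i, Finset.sum_add_distrib,
    Finset.sum_ite_eq' Finset.univ i0, Finset.sum_ite_eq' Finset.univ i1]
  simp

lemma lvs_norm_E (n : ℕ) (hn : 2 ≤ n) (ζ : Fin n → ℂ)
    (hζ : ζ = fun j : Fin n => if (j : ℕ) = 0 then Complex.I
      else if (j : ℕ) = 1 then 1 else 0) (h : ℝ) (hh : h ≠ 0) (x : Fin n → ℝ) :
    ‖Complex.exp ((-Complex.I) * (∑ i, (x i : ℂ) * ζ i) / (h : ℂ))‖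
      = Real.exp (x (⟨0, Nat.lt_of_lt_of_le Nat.zero_lt_two hn⟩ : Fin n) / h) := by
  rw [lvs_sum_val n hn ζ hζ x]
  set x0 := x (⟨0, Nat.lt_of_lt_of_le Nat.zero_lt_two hn⟩ : Fin n)
  set x1 := x (⟨1, by omega⟩ : Fin n)
  have hz : (-Complex.I) * ((x0 : ℂ) * Complex.I + (x1 : ℂ)) / (h : ℂ)
      = ((x0 / h : ℝ) : ℂ) + ((-(x1 / h) : ℝ) : ℂ) * Complex.I := by
    have hh' : (h : ℂ) ≠ 0 := by exact_mod_cast Complex.ofReal_ne_zero.mpr hh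
    push_cast
    field_simp
    linear_combination (-(x0 : ℂ)) * Complex.I_sq
  rw [hz, Complex.norm_exp]
  simp

lemma lvs_pointwise (n : ℕ) (hn : 2 ≤ n) (ζ : Fin n → ℂ)
    (hζ : ζ = fun j : Fin n => if (j : ℕ) = 0 then Complex.I
      else if (j : ℕ) = 1 then 1 else 0)
    (h : ℝ) (hh : 0 < h)
    (w : (Fin n → ℝ) → ℂ) (hw : ContDiff ℝ 1 w)
    (Fx : Fin n → ℂ) (gx : ℂ) (x : Fin n → ℝ)
    (heq : (∑ j, Fx j * ((-Complex.I) * fderiv ℝ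
          (fun y => Complex.exp ((-Complex.I) * (∑ i, (y i : ℂ) * ζ i) / (h : ℂ)) + w y)
          x (Pi.single j (1 : ℝ))))
        + gx * (Complex.exp ((-Complex.I) * (∑ i, (x i : ℂ) * ζ i) / (h : ℂ)) + w x) = 0) :
    ‖∑ j, Fx j * ζ j‖ ≤
      h * ((∑ j, ‖Fx j‖) * ‖fderiv ℝ w x‖ + ‖gx‖ * ‖w x‖) *
        Real.exp (-(x (⟨0, Nat.lt_of_lt_of_le Nat.zero_lt_two hn⟩ : Fin n)) / h) + h * ‖gx‖ := by
  set E := Complex.exp ((-Complex.I) * (∑ i, (x i : ℂ) * ζ i) / (h : ℂ)) with hE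
  set S := ∑ j, Fx j * ζ j with hS
  set T := ∑ j, Fx j * ((-Complex.I) * fderiv ℝ w x (Pi.single j (1 : ℝ))) with hT
  have hhc : (h : ℂ) ≠ 0 := Complex.ofReal_ne_zero.mpr hh.ne'
  have hEne : E ≠ 0 := Complex.exp_ne_zero _
  -- rewrite the PDE sum
  have hsum : (∑ j, Fx j * ((-Complex.I) * fderiv ℝ
        (fun y => Complex.exp ((-Complex.I) * (∑ i, (y i : ℂ) * ζ i) / (h : ℂ)) + w y)
        x (Pi.single j (1 : ℝ))))
      = -(E * S) / (h : ℂ) + T := by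
    have : ∀ j : Fin n, Fx j * ((-Complex.I) * fderiv ℝ
        (fun y => Complex.exp ((-Complex.I) * (∑ i, (y i : ℂ) * ζ i) / (h : ℂ)) + w y)
        x (Pi.single j (1 : ℝ)))
        = -(E * (Fx j * ζ j)) / (h : ℂ)
          + Fx j * ((-Complex.I) * fderiv ℝ w x (Pi.single j (1 : ℝ))) := by
      intro j
      rw [lvs_fderiv_apply n ζ h hh.ne' w hw x j, ← hE]
      linear_combination (E * Fx j * ζ j / (h:ℂ)) * Complex.I_sq
    rw [Finset.sum_congr rfl fun j _ => this j, Finset.sum_add_distrib, hT, hS]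
    congr 1
    rw [← Finset.sum_div]
    congr 1
    rw [Finset.mul_sum]
    exact Finset.sum_neg_distrib _
  rw [hsum] at heq
  have hSE : E * S = (h : ℂ) * (T + gx * (E + w x)) := by
    field_simp at heq
    linear_combination -heq
  -- norms
  have hnormE : ‖E‖ = Real.exp (x (⟨0, Nat.lt_of_lt_of_le Nat.zero_lt_two hn⟩ : Fin n) / h) :=
    lvs_norm_E n hn ζ hζ h hh.ne' x
  have hTnorm : ‖T‖ ≤ (∑ j, ‖Fx j‖) * ‖fderiv ℝ w x‖ := by
    rw [hT, Finset.sum_mul]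
    refine (norm_sum_le _ _).trans (Finset.sum_le_sum fun j _ => ?_)
    rw [norm_mul, norm_mul, norm_neg, Complex.norm_I, one_mul]
    refine mul_le_mul_of_nonneg_left ?_ (norm_nonneg _)
    calc ‖fderiv ℝ w x (Pi.single j (1 : ℝ))‖
        ≤ ‖fderiv ℝ w x‖ * ‖(Pi.single j (1 : ℝ) : Fin n → ℝ)‖ :=
          (fderiv ℝ w x).le_opNorm _
      _ = ‖fderiv ℝ w x‖ := by
          have h9 : ‖(Pi.single j (1 : ℝ) : Fin n → ℝ)‖ = ‖(1:ℝ)‖ := Pi.norm_single (G := fun _ : Fin n => ℝ) (i := j) (1:ℝ)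
          rw [h9, norm_one, mul_one]
  have key : ‖E‖ * ‖S‖ ≤ h * ((∑ j, ‖Fx j‖) * ‖fderiv ℝ w x‖ + ‖gx‖ * ‖w x‖)
      + h * ‖gx‖ * ‖E‖ := by
    have h1 : ‖E‖ * ‖S‖ = ‖E * S‖ := (norm_mul _ _).symm
    rw [h1, hSE, norm_mul, Complex.norm_real, Real.norm_of_nonneg hh.le]
    have h2 : ‖T + gx * (E + w x)‖ ≤ ((∑ j, ‖Fx j‖) * ‖fderiv ℝ w x‖ + ‖gx‖ * ‖w x‖)
        + ‖gx‖ * ‖E‖ := by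
      calc ‖T + gx * (E + w x)‖ ≤ ‖T‖ + ‖gx‖ * (‖E‖ + ‖w x‖) := by
            refine (norm_add_le _ _).trans ?_
            gcongr
            rw [norm_mul]
            gcongr
            exact norm_add_le _ _
        _ ≤ _ := by nlinarith [norm_nonneg gx, hTnorm]
    nlinarith [norm_nonneg (T + gx * (E + w x)), hh.le]
  set x0 := x (⟨0, Nat.lt_of_lt_of_le Nat.zero_lt_two hn⟩ : Fin n)
  have heE : (0:ℝ) < Real.exp (x0 / h) := Real.exp_pos _
  rw [hnormE] at key
  rw [neg_div, Real.exp_neg]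
  have h5 := mul_le_mul_of_nonneg_right key (inv_nonneg.mpr heE.le)
  rw [mul_comm (Real.exp (x0 / h)) ‖S‖, mul_assoc, mul_inv_cancel₀ heE.ne', mul_one] at h5
  calc ‖S‖ ≤ (h * ((∑ j, ‖Fx j‖) * ‖fderiv ℝ w x‖ + ‖gx‖ * ‖w x‖)
        + h * ‖gx‖ * Real.exp (x0 / h)) * (Real.exp (x0 / h))⁻¹ := h5
    _ = h * ((∑ j, ‖Fx j‖) * ‖fderiv ℝ w x‖ + ‖gx‖ * ‖w x‖) * (Real.exp (x0 / h))⁻¹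
        + h * ‖gx‖ := by field_simp

theorem local_vanishing_step (n : ℕ) (hn : 2 ≤ n)
    (Ω : Set (Fin n → ℝ)) (hΩ : IsOpen Ω) (hΩbdd : Bornology.IsBounded Ω)
    (c : ℝ) (hc : 0 < c)
    (ζ : Fin n → ℂ)
    (hζ : ζ = fun j : Fin n => if (j : ℕ) = 0 then Complex.I
      else if (j : ℕ) = 1 then 1 else 0)
    (F : (Fin n → ℝ) → (Fin n → ℂ)) (g : (Fin n → ℝ) → ℂ)
    (hFmeas : Measurable F) (hgmeas : Measurable g)
    (hFbdd : MemLp F ⊤ (volume.restrict Ω))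
    (hgbdd : MemLp g ⊤ (volume.restrict Ω))
    (hex : ∃ C > (0 : ℝ), ∃ N : ℝ, 0 ≤ N ∧
      ∀ h : ℝ, h ∈ Set.Ioo (0 : ℝ) 1 →
        ∃ w : (Fin n → ℝ) → ℂ, ContDiff ℝ 1 w ∧
          (∀ x ∈ Ω, ‖w x‖ + ‖fderiv ℝ w x‖ ≤
            C * (1 + 1 / h) ^ N * Real.exp (-c / h)) ∧
          (∀ᵐ x ∂(volume.restrict Ω),
            (∑ j, F x j * ((-Complex.I) * fderiv ℝ
                (fun y => Complex.exp
                    ((-Complex.I) * (∑ i, (y i : ℂ) * ζ i) / (h : ℂ)) + w y)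
                x (Pi.single j (1 : ℝ))))
              + g x * (Complex.exp
                  ((-Complex.I) * (∑ i, (x i : ℂ) * ζ i) / (h : ℂ)) + w x)
              = 0)) :
    ∀ᵐ x ∂(volume.restrict Ω),
      x (⟨0, by omega⟩ : Fin n) > -c → (∑ j, F x j * ζ j) = 0 := by
  obtain ⟨C, hC, N, hN, hkey⟩ := hex
  set μ := volume.restrict Ω with hμ
  have hFfin : eLpNormEssSup F μ ≠ ⊤ := by
    have := hFbdd.2; rw [eLpNorm_exponent_top] at this; exact this.ne
  have hgfin : eLpNormEssSup g μ ≠ ⊤ := by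
    have := hgbdd.2; rw [eLpNorm_exponent_top] at this; exact this.ne
  set MF : ℝ := (eLpNormEssSup F μ).toReal with hMFdef
  set Mg : ℝ := (eLpNormEssSup g μ).toReal with hMgdef
  have hMF : ∀ᵐ x ∂μ, ‖F x‖ ≤ MF := by
    filter_upwards [enorm_ae_le_eLpNormEssSup F μ] with x hx
    have := ENNReal.toReal_mono hFfin hx
    simpa using this
  have hMg : ∀ᵐ x ∂μ, ‖g x‖ ≤ Mg := by
    filter_upwards [enorm_ae_le_eLpNormEssSup g μ] with x hx
    have := ENNReal.toReal_mono hgfin hx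
    simpa using this
  have hseq : ∀ k : ℕ, (1 / ((k : ℝ) + 2)) ∈ Set.Ioo (0 : ℝ) 1 := by
    intro k
    constructor
    · positivity
    · rw [div_lt_one (by positivity)]
      have : (0:ℝ) ≤ (k:ℝ) := Nat.cast_nonneg k
      linarith
  choose w hw1 hw2 hw3 using fun k : ℕ => hkey (1 / ((k : ℝ) + 2)) (hseq k)
  have hmem : ∀ᵐ x ∂μ, x ∈ Ω := ae_restrict_mem hΩ.measurableSet
  filter_upwards [hMF, hMg, hmem, ae_all_iff.2 hw3] with x hFx hgx hxΩ hall
  intro hx0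
  set x0 := x (⟨0, by omega⟩ : Fin n) with hx0def
  have hcx : (0:ℝ) < c + x0 := by dsimp [x0] at hx0 ⊢; linarith
  set S := ∑ j, F x j * ζ j with hSdef
  have hMF0 : 0 ≤ MF := ENNReal.toReal_nonneg
  have hMg0 : 0 ≤ Mg := ENNReal.toReal_nonneg
  -- the bound sequence
  set b : ℕ → ℝ := fun k =>
    (1 / ((k : ℝ) + 2)) * (((n : ℝ) * MF + Mg) * C) *
      ((((k : ℝ) + 3) ^ N) * Real.exp (-(c + x0) * ((k : ℝ) + 3))) * Real.exp (c + x0)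
    + (1 / ((k : ℝ) + 2)) * Mg with hbdef
  have hbd : ∀ k : ℕ, ‖S‖ ≤ b k := by
    intro k
    set hk : ℝ := 1 / ((k : ℝ) + 2) with hhk
    have hk0 : 0 < hk := (hseq k).1
    have hB := hw2 k x hxΩ
    set Bk : ℝ := C * (1 + 1 / hk) ^ N * Real.exp (-c / hk) with hBk
    have hBk0 : 0 ≤ Bk := by positivity
    have hwn : ‖w k x‖ ≤ Bk := le_trans (le_add_of_nonneg_right (norm_nonneg _)) hB
    have hdn : ‖fderiv ℝ (w k) x‖ ≤ Bk := le_trans (le_add_of_nonneg_left (norm_nonneg _)) hB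
    have hmain := lvs_pointwise n hn ζ hζ hk hk0 (w k) (hw1 k) (F x) (g x) x (hall k)
    refine hmain.trans ?_
    have hsumF : (∑ j, ‖F x j‖) ≤ (n : ℝ) * MF := by
      calc (∑ j, ‖F x j‖) ≤ ∑ _j : Fin n, MF :=
            Finset.sum_le_sum fun j _ => (norm_le_pi_norm (F x) j).trans hFx
        _ = (n : ℝ) * MF := by simp [mul_comm]
    have step1 : hk * ((∑ j, ‖F x j‖) * ‖fderiv ℝ (w k) x‖ + ‖g x‖ * ‖w k x‖) *
        Real.exp (-x0 / hk) + hk * ‖g x‖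
        ≤ hk * (((n : ℝ) * MF + Mg) * Bk) * Real.exp (-x0 / hk) + hk * Mg := by
      gcongr
      · calc (∑ j, ‖F x j‖) * ‖fderiv ℝ (w k) x‖ + ‖g x‖ * ‖w k x‖
            ≤ ((n : ℝ) * MF) * Bk + Mg * Bk := by
              gcongr <;> first | positivity | assumption
          _ = ((n : ℝ) * MF + Mg) * Bk := by ring
    refine step1.trans (le_of_eq ?_)
    rw [hbdef, hBk]
    have h1 : 1 / hk = (k : ℝ) + 2 := by rw [hhk, one_div_one_div]
    have h2 : -c / hk = -c * ((k : ℝ) + 2) := by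
      rw [hhk]; field_simp
    have h3 : -x0 / hk = -x0 * ((k : ℝ) + 2) := by
      rw [hhk]; field_simp
    rw [h1, h2, h3]
    have h4 : (1 + ((k : ℝ) + 2)) = ((k : ℝ) + 3) := by ring
    rw [h4]
    have h5 : Real.exp (-c * ((k : ℝ) + 2)) * Real.exp (-x0 * ((k : ℝ) + 2))
        = Real.exp (-(c + x0) * ((k : ℝ) + 3)) * Real.exp (c + x0) := by
      rw [← Real.exp_add, ← Real.exp_add]
      congr 1
      ring
    calc hk * (((n : ℝ) * MF + Mg) * (C * ((k : ℝ) + 3) ^ N *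
          Real.exp (-c * ((k : ℝ) + 2)))) * Real.exp (-x0 * ((k : ℝ) + 2)) + hk * Mg
        = hk * (((n : ℝ) * MF + Mg) * C) * (((k : ℝ) + 3) ^ N *
            (Real.exp (-c * ((k : ℝ) + 2)) * Real.exp (-x0 * ((k : ℝ) + 2)))) + hk * Mg := by
          ring
      _ = _ := by rw [h5, hhk]; ring
  -- the bound tends to zero
  have ht1 : Filter.Tendsto (fun k : ℕ => 1 / ((k : ℝ) + 2)) Filter.atTop (nhds 0) := by
    have h6 : Filter.Tendsto (fun k : ℕ => ((k : ℝ) + 2)) Filter.atTop Filter.atTop :=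
      Filter.tendsto_atTop_add_const_right _ 2 tendsto_natCast_atTop_atTop
    have := tendsto_inv_atTop_zero.comp h6
    simpa [one_div, Function.comp_def] using this
  have ht2 : Filter.Tendsto
      (fun k : ℕ => (((k : ℝ) + 3) ^ N) * Real.exp (-(c + x0) * ((k : ℝ) + 3)))
      Filter.atTop (nhds 0) := by
    have hbase := tendsto_rpow_mul_exp_neg_mul_atTop_nhds_zero N (c + x0) hcx
    have h6 : Filter.Tendsto (fun k : ℕ => ((k : ℝ) + 3)) Filter.atTop Filter.atTop :=
      Filter.tendsto_atTop_add_const_right _ 3 tendsto_natCast_atTop_atTop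
    have := hbase.comp h6
    simpa [Function.comp_def, neg_mul] using this
  have htb : Filter.Tendsto b Filter.atTop (nhds 0) := by
    have := (((ht1.mul_const (((n : ℝ) * MF + Mg) * C)).mul ht2).mul_const
        (Real.exp (c + x0))).add (ht1.mul_const Mg)
    simpa only [zero_mul, mul_zero, zero_add, add_zero] using this
  have hS0 : ‖S‖ ≤ 0 := ge_of_tendsto' htb hbd
  exact norm_le_zero_iff.mp hS0
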